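/- For every finite simple graph G (with any fixed endpoint-ordering of its edges), the number of 9-cycle subgraphs of the odd expanded graph G'' equals the number of 3-cycle subgraphs of G plus 4 times the number of 4-cycle subgraphs of G. -/

import Mathlib

/-- The cycle graph `C_n` on vertex set `ZMod n`: `i` and `j` are adjacent iff
they differ by `1`. -/
def cycleGraphZMod (n : ℕ) : SimpleGraph (ZMod n) :=
  SimpleGraph.fromRel (fun i j => j = i + 1)

/-- The number of `k`-cycle subgraphs of `G`: the number of subgraphs of `G`
whose underlying graph is isomorphic to the cycle graph `C_k`. -/
noncomputable def cycleCount {V : Type*} (G : SimpleGraph V) (k : ℕ) : ℕ :=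
  Nat.card {H : G.Subgraph // Nonempty (H.coe ≃g cycleGraphZMod k)}

/-- The odd expanded graph `G''` of a simple graph `G` with an endpoint-ordering
`f` of its edges: every edge `e` with ordered endpoints `(u_e, v_e)` is replaced
by a path of length `2` (through `(e,0)`) and a path of length `3` (through
`(e,1)` and `(e,2)`) between `u_e` and `v_e`. -/
def oddExpandedGraph {V : Type*} (G : SimpleGraph V) (f : G.edgeSet → V × V) :
    SimpleGraph (V ⊕ (G.edgeSet × Fin 3)) :=
  SimpleGraph.fromRel (fun x y => ∃ e : G.edgeSet,
    (x = Sum.inl (f e).1 ∧ y = Sum.inr (e, 0)) ∨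
    (x = Sum.inr (e, 0) ∧ y = Sum.inl (f e).2) ∨
    (x = Sum.inl (f e).1 ∧ y = Sum.inr (e, 1)) ∨
    (x = Sum.inr (e, 1) ∧ y = Sum.inr (e, 2)) ∨
    (x = Sum.inr (e, 2) ∧ y = Sum.inl (f e).2))


open Function

namespace OE
variable {W : Type*} (G : SimpleGraph W)

lemma cgz_adj {n : ℕ} (i j : ZMod n) :
    (cycleGraphZMod n).Adj i j ↔ i ≠ j ∧ (j = i + 1 ∨ i = j + 1) :=
  SimpleGraph.fromRel_adj _ i j

/-- The cycle subgraph traced by `w`. -/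
def cyc (n : ℕ) (w : ZMod n → W) (hw : ∀ i, G.Adj (w i) (w (i+1))) : G.Subgraph where
  verts := Set.range w
  Adj x y := ∃ i, (x = w i ∧ y = w (i+1)) ∨ (x = w (i+1) ∧ y = w i)
  adj_sub := by
    rintro x y ⟨i, (⟨rfl, rfl⟩ | ⟨rfl, rfl⟩)⟩
    · exact hw i
    · exact (hw i).symm
  edge_vert := by
    rintro x y ⟨i, (⟨rfl, rfl⟩ | ⟨rfl, rfl⟩)⟩
    · exact ⟨i, rfl⟩
    · exact ⟨i + 1, rfl⟩
  symm := by
    constructor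
    rintro x y ⟨i, (⟨rfl, rfl⟩ | ⟨rfl, rfl⟩)⟩
    · exact ⟨i, Or.inr ⟨rfl, rfl⟩⟩
    · exact ⟨i, Or.inl ⟨rfl, rfl⟩⟩

lemma cyc_verts (n : ℕ) (w : ZMod n → W) (hw) : (cyc G n w hw).verts = Set.range w := rfl

lemma cyc_adj (n : ℕ) (w : ZMod n → W) (hw) (x y : W) :
    (cyc G n w hw).Adj x y ↔ ∃ i, (x = w i ∧ y = w (i+1)) ∨ (x = w (i+1) ∧ y = w i) :=
  Iff.rfl

lemma cyc_iso {n : ℕ} (h1 : ∀ i : ZMod n, i ≠ i + 1) (w : ZMod n → W)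
    (hinj : Injective w) (hw : ∀ i, G.Adj (w i) (w (i+1))) :
    Nonempty ((cyc G n w hw).coe ≃g cycleGraphZMod n) := by
  have key : ∀ (x : ↥(cyc G n w hw).verts) (i : ZMod n), w i = ↑x →
      (Equiv.ofInjective w hinj).symm x = i := by
    intro x i h
    apply hinj
    rw [Equiv.apply_ofInjective_symm hinj x, ← h]
  refine ⟨⟨(Equiv.ofInjective w hinj).symm, ?_⟩⟩
  intro a b
  obtain ⟨i, hi⟩ := a.2
  obtain ⟨j, hj⟩ := b.2
  show (cycleGraphZMod n).Adj ((Equiv.ofInjective w hinj).symm a)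
      ((Equiv.ofInjective w hinj).symm b) ↔ (cyc G n w hw).coe.Adj a b
  rw [key a i hi, key b j hj, SimpleGraph.Subgraph.coe_adj, cgz_adj, ← hi, ← hj]
  constructor
  · rintro ⟨hne, (rfl | rfl)⟩
    · exact ⟨i, Or.inl ⟨rfl, rfl⟩⟩
    · exact ⟨j, Or.inr ⟨rfl, rfl⟩⟩
  · rintro ⟨k, (⟨h1', h2⟩ | ⟨h1', h2⟩)⟩
    · obtain rfl : i = k := hinj h1'
      obtain rfl : j = i + 1 := hinj h2
      exact ⟨h1 i, Or.inl rfl⟩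
    · obtain rfl : j = k := hinj h2
      obtain rfl : i = j + 1 := hinj h1'
      exact ⟨fun h => h1 j h.symm, Or.inr rfl⟩

lemma exists_cyc {n : ℕ} (h1 : ∀ i : ZMod n, i ≠ i + 1) (H : G.Subgraph)
    (hH : Nonempty (H.coe ≃g cycleGraphZMod n)) :
    ∃ (w : ZMod n → W) (hinj : Injective w)
      (hw : ∀ i, G.Adj (w i) (w (i+1))), H = cyc G n w hw := by
  obtain ⟨φ⟩ := hH
  set w : ZMod n → W := fun i => (φ.symm i : W) with hwdef
  have hmem : ∀ i, w i ∈ H.verts := fun i => (φ.symm i).2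
  have hinj : Injective w := by
    intro i j h
    have := Subtype.ext (p := (· ∈ H.verts)) h
    exact φ.symm.injective this
  have hco : ∀ i j, H.Adj (w i) (w j) ↔ (cycleGraphZMod n).Adj i j := by
    intro i j
    rw [← φ.symm.map_rel_iff (a := i) (b := j)]
    exact (Iff.of_eq (SimpleGraph.Subgraph.coe_adj H (φ.symm i) (φ.symm j))).symm
  have hw : ∀ i, H.Adj (w i) (w (i+1)) := by
    intro i
    rw [hco]
    exact (cgz_adj i (i+1)).2 ⟨h1 i, Or.inl rfl⟩
  refine ⟨w, hinj, fun i => H.adj_sub (hw i), ?_⟩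
  apply SimpleGraph.Subgraph.ext
  · ext x
    constructor
    · intro hx
      exact ⟨φ ⟨x, hx⟩, by simp [hwdef]⟩
    · rintro ⟨i, rfl⟩; exact hmem i
  · ext x y
    constructor
    · intro hxy
      have hx : x ∈ H.verts := H.edge_vert hxy
      have hy : y ∈ H.verts := H.edge_vert hxy.symm
      obtain ⟨i, hi⟩ : ∃ i, w i = x := ⟨φ ⟨x, hx⟩, by simp [hwdef]⟩
      obtain ⟨j, hj⟩ : ∃ j, w j = y := ⟨φ ⟨y, hy⟩, by simp [hwdef]⟩
      subst hi; subst hj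
      have := (hco i j).1 hxy
      rw [cgz_adj] at this
      obtain ⟨-, (rfl | rfl)⟩ := this
      · exact ⟨i, Or.inl ⟨rfl, rfl⟩⟩
      · exact ⟨j, Or.inr ⟨rfl, rfl⟩⟩
    · rintro ⟨i, (⟨rfl, rfl⟩ | ⟨rfl, rfl⟩)⟩
      · exact hw i
      · exact (hw i).symm

end OE

open Function Sum

namespace OE
variable {V : Type*} {G : SimpleGraph V} {f : G.edgeSet → V × V}

lemma fne (hf : ∀ e : G.edgeSet, (e : Sym2 V) = s((f e).1, (f e).2))
    (e : G.edgeSet) : (f e).1 ≠ (f e).2 := by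
  have h2 := e.2
  rw [hf e, SimpleGraph.mem_edgeSet] at h2
  exact h2.ne

lemma adj_inl_inl (a b : V) : ¬ (oddExpandedGraph G f).Adj (inl a) (inl b) := by
  rw [oddExpandedGraph, SimpleGraph.fromRel_adj]
  rintro ⟨-, (⟨e, h⟩ | ⟨e, h⟩)⟩ <;> rcases h with h|h|h|h|h <;> simp_all

lemma adj_inr0 (x) (e : G.edgeSet) :
    (oddExpandedGraph G f).Adj x (inr (e,0)) ↔ x = inl (f e).1 ∨ x = inl (f e).2 := by
  rw [oddExpandedGraph, SimpleGraph.fromRel_adj]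
  constructor
  · rintro ⟨-, (⟨e', h⟩ | ⟨e', h⟩)⟩ <;> rcases h with h|h|h|h|h <;>
      obtain ⟨h1, h2⟩ := h <;> simp_all [Prod.ext_iff]
  · rintro (rfl | rfl)
    · exact ⟨by simp, Or.inl ⟨e, Or.inl ⟨rfl, rfl⟩⟩⟩
    · exact ⟨by simp, Or.inr ⟨e, Or.inr <| Or.inl ⟨rfl, rfl⟩⟩⟩

lemma adj_inr1 (x) (e : G.edgeSet) :
    (oddExpandedGraph G f).Adj x (inr (e,1)) ↔ x = inl (f e).1 ∨ x = inr (e,2) := by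
  rw [oddExpandedGraph, SimpleGraph.fromRel_adj]
  constructor
  · rintro ⟨hne, (⟨e', h⟩ | ⟨e', h⟩)⟩ <;> rcases h with h|h|h|h|h <;>
      obtain ⟨h1, h2⟩ := h <;> simp_all [Prod.ext_iff]
  · rintro (rfl | rfl)
    · exact ⟨by simp, Or.inl ⟨e, Or.inr <| Or.inr <| Or.inl ⟨rfl, rfl⟩⟩⟩
    · exact ⟨by simp, Or.inr ⟨e, Or.inr <| Or.inr <| Or.inr <| Or.inl ⟨rfl, rfl⟩⟩⟩

lemma adj_inr2 (x) (e : G.edgeSet) :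
    (oddExpandedGraph G f).Adj x (inr (e,2)) ↔ x = inr (e,1) ∨ x = inl (f e).2 := by
  rw [oddExpandedGraph, SimpleGraph.fromRel_adj]
  constructor
  · rintro ⟨hne, (⟨e', h⟩ | ⟨e', h⟩)⟩ <;> rcases h with h|h|h|h|h <;>
      obtain ⟨h1, h2⟩ := h <;> simp_all [Prod.ext_iff]
  · rintro (rfl | rfl)
    · exact ⟨by simp, Or.inl ⟨e, Or.inr <| Or.inr <| Or.inr <| Or.inl ⟨rfl, rfl⟩⟩⟩
    · exact ⟨by simp, Or.inr ⟨e, Or.inr <| Or.inr <| Or.inr <| Or.inr ⟨rfl, rfl⟩⟩⟩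

lemma adj_inr_inr (x y : G.edgeSet × Fin 3) :
    (oddExpandedGraph G f).Adj (inr x) (inr y) ↔
      ∃ e, (x = (e,1) ∧ y = (e,2)) ∨ (x = (e,2) ∧ y = (e,1)) := by
  rw [oddExpandedGraph, SimpleGraph.fromRel_adj]
  constructor
  · rintro ⟨hne, (⟨e', h⟩ | ⟨e', h⟩)⟩ <;>
      rcases h with ⟨h1,h2⟩|⟨h1,h2⟩|⟨h1,h2⟩|⟨h1,h2⟩|⟨h1,h2⟩ <;>
      simp only [Sum.inr.injEq, reduceCtorEq] at h1 h2 <;>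
      first
      | exact ⟨e', Or.inl ⟨h1, h2⟩⟩
      | exact ⟨e', Or.inr ⟨h2, h1⟩⟩
  · rintro ⟨e, (⟨rfl, rfl⟩ | ⟨rfl, rfl⟩)⟩
    · exact ⟨by simp, Or.inl ⟨e, Or.inr <| Or.inr <| Or.inr <| Or.inl ⟨rfl, rfl⟩⟩⟩
    · exact ⟨by simp, Or.inr ⟨e, Or.inr <| Or.inr <| Or.inr <| Or.inl ⟨rfl, rfl⟩⟩⟩

end OE

open Function Sum

namespace OE
variable {V : Type*} {G : SimpleGraph V} {f : G.edgeSet → V × V}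

lemma adj_of_edge {e : G.edgeSet} {a b : V} (h : (e : Sym2 V) = s(a,b)) :
    G.Adj a b := by
  have h2 := e.2
  rwa [h, SimpleGraph.mem_edgeSet] at h2

lemma edge_of_or (hf : ∀ e : G.edgeSet, (e : Sym2 V) = s((f e).1, (f e).2))
    {e : G.edgeSet} {a b : V}
    (hor : (a = (f e).1 ∧ b = (f e).2) ∨ (a = (f e).2 ∧ b = (f e).1)) :
    (e : Sym2 V) = s(a,b) := by
  rcases hor with ⟨rfl, rfl⟩ | ⟨rfl, rfl⟩
  · exact hf e
  · rw [hf e]; exact Sym2.eq_swap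

lemma seg1 {a b : V} {x : G.edgeSet × Fin 3} (hab : a ≠ b)
    (h1 : (oddExpandedGraph G f).Adj (inl a) (inr x))
    (h2 : (oddExpandedGraph G f).Adj (inr x) (inl b)) :
    ∃ e, x = (e, 0) ∧
      ((a = (f e).1 ∧ b = (f e).2) ∨ (a = (f e).2 ∧ b = (f e).1)) := by
  obtain ⟨e, t⟩ := x
  rcases (by decide : ∀ t : Fin 3, t = 0 ∨ t = 1 ∨ t = 2) t with rfl | rfl | rfl
  · rw [adj_inr0] at h1
    rw [SimpleGraph.adj_comm, adj_inr0] at h2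
    simp only [inl.injEq] at h1 h2
    refine ⟨e, rfl, ?_⟩
    rcases h1 with rfl | rfl <;> rcases h2 with rfl | rfl <;> tauto
  · rw [adj_inr1] at h1
    rw [SimpleGraph.adj_comm, adj_inr1] at h2
    simp only [inl.injEq, reduceCtorEq, or_false] at h1 h2
    exact absurd (h1.trans h2.symm) hab
  · rw [adj_inr2] at h1
    rw [SimpleGraph.adj_comm, adj_inr2] at h2
    simp only [inl.injEq, reduceCtorEq, false_or] at h1 h2
    exact absurd (h1.trans h2.symm) hab

lemma seg2 {a b : V} {x y : G.edgeSet × Fin 3} (hab : a ≠ b)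
    (h1 : (oddExpandedGraph G f).Adj (inl a) (inr x))
    (h2 : (oddExpandedGraph G f).Adj (inr x) (inr y))
    (h3 : (oddExpandedGraph G f).Adj (inr y) (inl b)) :
    ∃ e, (x = (e,1) ∧ y = (e,2) ∧ a = (f e).1 ∧ b = (f e).2) ∨
      (x = (e,2) ∧ y = (e,1) ∧ a = (f e).2 ∧ b = (f e).1) := by
  rw [adj_inr_inr] at h2
  obtain ⟨e, (⟨rfl, rfl⟩ | ⟨rfl, rfl⟩)⟩ := h2
  · rw [adj_inr1] at h1
    rw [SimpleGraph.adj_comm, adj_inr2] at h3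
    simp only [inl.injEq, reduceCtorEq, or_false, false_or] at h1 h3
    exact ⟨e, Or.inl ⟨rfl, rfl, h1, h3⟩⟩
  · rw [adj_inr2] at h1
    rw [SimpleGraph.adj_comm, adj_inr1] at h3
    simp only [inl.injEq, reduceCtorEq, or_false, false_or] at h1 h3
    exact ⟨e, Or.inr ⟨rfl, rfl, h1, h3⟩⟩

lemma no_three_inr {x y z : G.edgeSet × Fin 3}
    (h1 : (oddExpandedGraph G f).Adj (inr x) (inr y))
    (h2 : (oddExpandedGraph G f).Adj (inr y) (inr z)) : x = z := by
  rw [adj_inr_inr] at h1 h2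
  obtain ⟨e, (⟨rfl, rfl⟩ | ⟨rfl, rfl⟩)⟩ := h1 <;>
    obtain ⟨e', (⟨he, rfl⟩ | ⟨he, rfl⟩)⟩ := h2 <;>
    simp only [Prod.mk.injEq] at he ⊢
  · exact absurd he.2 (by decide)
  · exact ⟨he.1, trivial⟩
  · exact ⟨he.1, trivial⟩
  · exact absurd he.2 (by decide)

set_option maxHeartbeats 4000000 in
set_option maxRecDepth 10000 in
lemma patternClassify : ∀ p : ZMod 9 → Bool, (∃ i, p i = true) →
    (∀ i, ¬(p i = true ∧ p (i+1) = true)) →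
    (∀ i, ¬(p i = false ∧ p (i+1) = false ∧ p (i+2) = false)) →
    ∃ j : ZMod 9, (∀ k, p k = true ↔ (k = j ∨ k = j+3 ∨ k = j+6)) ∨
      (∀ k, p k = true ↔ (k = j ∨ k = j+3 ∨ k = j+5 ∨ k = j+7)) := by decide

end OE

open Function Sum SimpleGraph

namespace OE

/-! ### generic lattice / cyc helpers -/

section lat
variable {β : Type*} [CompleteLattice β]

lemma iSup_subtype3 {α : Type*} {P : α → Prop} {e0 e1 e2 : α}
    (h : ∀ d, P d ↔ d = e0 ∨ d = e1 ∨ d = e2) (g : α → β) :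
    (⨆ d : {d // P d}, g d.1) = g e0 ⊔ g e1 ⊔ g e2 := by
  apply le_antisymm
  · refine iSup_le fun d => ?_
    rcases (h d.1).1 d.2 with h' | h' | h' <;> rw [h']
    · exact le_sup_left.trans le_sup_left
    · exact le_sup_right.trans le_sup_left
    · exact le_sup_right
  · refine sup_le (sup_le ?_ ?_) ?_
    · exact le_iSup (fun d : {d // P d} => g d.1) ⟨e0, (h e0).2 (Or.inl rfl)⟩
    · exact le_iSup (fun d : {d // P d} => g d.1) ⟨e1, (h e1).2 (Or.inr (Or.inl rfl))⟩
    · exact le_iSup (fun d : {d // P d} => g d.1) ⟨e2, (h e2).2 (Or.inr (Or.inr rfl))⟩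

lemma iSup_zmod9 (g : ZMod 9 → β) :
    (⨆ i, g i) = g 0 ⊔ g 1 ⊔ g 2 ⊔ g 3 ⊔ g 4 ⊔ g 5 ⊔ g 6 ⊔ g 7 ⊔ g 8 := by
  apply le_antisymm
  · refine iSup_le fun i => ?_
    rcases (by decide :
        ∀ i : ZMod 9, i = 0 ∨ i = 1 ∨ i = 2 ∨ i = 3 ∨ i = 4 ∨ i = 5 ∨ i = 6 ∨ i = 7 ∨ i = 8) i
      with rfl|rfl|rfl|rfl|rfl|rfl|rfl|rfl|rfl
    · exact (((((((le_sup_left.trans le_sup_left).trans le_sup_left).trans le_sup_left).trans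
        le_sup_left).trans le_sup_left).trans le_sup_left).trans le_sup_left)
    · exact (((((((le_sup_right.trans le_sup_left).trans le_sup_left).trans le_sup_left).trans
        le_sup_left).trans le_sup_left).trans le_sup_left).trans le_sup_left)
    · exact ((((((le_sup_right.trans le_sup_left).trans le_sup_left).trans le_sup_left).trans
        le_sup_left).trans le_sup_left).trans le_sup_left)
    · exact (((((le_sup_right.trans le_sup_left).trans le_sup_left).trans le_sup_left).trans
        le_sup_left).trans le_sup_left)
    · exact ((((le_sup_right.trans le_sup_left).trans le_sup_left).trans le_sup_left).trans
        le_sup_left)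
    · exact (((le_sup_right.trans le_sup_left).trans le_sup_left).trans le_sup_left)
    · exact ((le_sup_right.trans le_sup_left).trans le_sup_left)
    · exact le_sup_right.trans le_sup_left
    · exact le_sup_right
  · repeat' apply sup_le
    all_goals exact le_iSup g _

end lat

variable {W : Type*} {G : SimpleGraph W}

lemma sgoa_eq {a b c d : W} (h : G.Adj a b) (h' : G.Adj c d) (hp : s(a,b) = s(c,d)) :
    G.subgraphOfAdj h = G.subgraphOfAdj h' := by
  apply SimpleGraph.Subgraph.ext
  · rw [subgraphOfAdj_verts, subgraphOfAdj_verts]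
    rcases Sym2.eq_iff.1 hp with ⟨rfl, rfl⟩ | ⟨rfl, rfl⟩
    · rfl
    · exact Set.pair_comm a b
  · funext x y
    rw [subgraphOfAdj_adj, subgraphOfAdj_adj, hp]

lemma cyc_eq_iSup {n : ℕ} (w : ZMod n → W) (hw) :
    cyc G n w hw = ⨆ i, G.subgraphOfAdj (hw i) := by
  apply SimpleGraph.Subgraph.ext
  · rw [SimpleGraph.Subgraph.verts_iSup, cyc_verts]
    ext x
    constructor
    · rintro ⟨i, rfl⟩
      exact Set.mem_iUnion.2 ⟨i, by rw [subgraphOfAdj_verts]; exact Or.inl rfl⟩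
    · intro hx
      obtain ⟨i, hi⟩ := Set.mem_iUnion.1 hx
      rw [subgraphOfAdj_verts] at hi
      rcases hi with rfl | rfl
      · exact ⟨i, rfl⟩
      · exact ⟨i + 1, rfl⟩
  · funext x y
    apply propext
    rw [SimpleGraph.Subgraph.iSup_adj, cyc_adj]
    constructor
    · rintro ⟨i, (⟨rfl, rfl⟩ | ⟨rfl, rfl⟩)⟩
      · exact ⟨i, by rw [subgraphOfAdj_adj]⟩
      · exact ⟨i, by rw [subgraphOfAdj_adj]; exact Sym2.eq_swap⟩
    · rintro ⟨i, hi⟩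
      rw [subgraphOfAdj_adj] at hi
      rcases Sym2.eq_iff.1 hi with ⟨rfl, rfl⟩ | ⟨rfl, rfl⟩
      · exact ⟨i, Or.inl ⟨rfl, rfl⟩⟩
      · exact ⟨i, Or.inr ⟨rfl, rfl⟩⟩

lemma rot_adj {n : ℕ} {w : ZMod n → W} (hw : ∀ i, G.Adj (w i) (w (i+1))) (j : ZMod n) :
    ∀ i, G.Adj ((fun i => w (j+i)) i) ((fun i => w (j+i)) (i+1)) := fun i => by
  simpa [add_assoc] using hw (j + i)

lemma cyc_rot {n : ℕ} (w : ZMod n → W) (hw) (j : ZMod n) :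
    cyc G n (fun i => w (j+i)) (rot_adj hw j) = cyc G n w hw := by
  apply SimpleGraph.Subgraph.ext
  · rw [cyc_verts, cyc_verts]
    ext x
    constructor
    · rintro ⟨i, rfl⟩; exact ⟨j + i, rfl⟩
    · rintro ⟨i, rfl⟩; exact ⟨i - j, by simp⟩
  · funext x y
    apply propext
    rw [cyc_adj, cyc_adj]
    constructor
    · rintro ⟨i, h⟩
      refine ⟨j + i, ?_⟩
      rwa [show w (j + i + 1) = w (j + (i + 1)) from congrArg w (by ring)]
    · rintro ⟨i, h⟩
      refine ⟨i - j, ?_⟩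
      rwa [show w (j + (i - j)) = w i from congrArg w (by ring),
        show w (j + (i - j + 1)) = w (i + 1) from congrArg w (by ring)]
  
lemma cyc_edgeSet {n : ℕ} (w : ZMod n → W) (hw) (q : Sym2 W) :
    q ∈ (cyc G n w hw).edgeSet ↔ ∃ i, q = s(w i, w (i+1)) := by
  induction q using Sym2.ind with
  | _ x y =>
    rw [SimpleGraph.Subgraph.mem_edgeSet, cyc_adj]
    constructor
    · rintro ⟨i, (⟨rfl, rfl⟩ | ⟨rfl, rfl⟩)⟩
      · exact ⟨i, rfl⟩
      · exact ⟨i, Sym2.eq_swap⟩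
    · rintro ⟨i, hi⟩
      rcases Sym2.eq_iff.1 hi with ⟨rfl, rfl⟩ | ⟨rfl, rfl⟩
      · exact ⟨i, Or.inl ⟨rfl, rfl⟩⟩
      · exact ⟨i, Or.inr ⟨rfl, rfl⟩⟩

end OE

open Function Sum SimpleGraph

namespace OE

variable {V : Type*} {G : SimpleGraph V} {f : G.edgeSet → V × V}

lemma gadj1 (e : G.edgeSet) : (oddExpandedGraph G f).Adj (inl (f e).1) (inr (e,1)) :=
  (adj_inr1 _ e).2 (Or.inl rfl)

lemma gadj2 (e : G.edgeSet) : (oddExpandedGraph G f).Adj (inr (e,1)) (inr (e,2)) :=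
  (adj_inr2 _ e).2 (Or.inl rfl)

lemma gadj3 (e : G.edgeSet) : (oddExpandedGraph G f).Adj (inr (e,2)) (inl (f e).2) :=
  ((adj_inr2 _ e).2 (Or.inr rfl)).symm

lemma gadj4 (e : G.edgeSet) : (oddExpandedGraph G f).Adj (inl (f e).1) (inr (e,0)) :=
  (adj_inr0 _ e).2 (Or.inl rfl)

lemma gadj5 (e : G.edgeSet) : (oddExpandedGraph G f).Adj (inr (e,0)) (inl (f e).2) :=
  ((adj_inr0 _ e).2 (Or.inr rfl)).symm

/-- the long (length 3) gadget path of an edge -/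
def gad3 (f : G.edgeSet → V × V) (e : G.edgeSet) : (oddExpandedGraph G f).Subgraph :=
  (oddExpandedGraph G f).subgraphOfAdj (gadj1 e) ⊔
  (oddExpandedGraph G f).subgraphOfAdj (gadj2 e) ⊔
  (oddExpandedGraph G f).subgraphOfAdj (gadj3 e)

/-- the short (length 2) gadget path of an edge -/
def gad2 (f : G.edgeSet → V × V) (e : G.edgeSet) : (oddExpandedGraph G f).Subgraph :=
  (oddExpandedGraph G f).subgraphOfAdj (gadj4 e) ⊔
  (oddExpandedGraph G f).subgraphOfAdj (gadj5 e)

lemma seg3_sup (hf : ∀ e : G.edgeSet, (e : Sym2 V) = s((f e).1, (f e).2))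
    {x0 x1 x2 x3 : V ⊕ (G.edgeSet × Fin 3)} {a b : V} (hab : a ≠ b)
    (h01 : (oddExpandedGraph G f).Adj x0 x1) (h12 : (oddExpandedGraph G f).Adj x1 x2)
    (h23 : (oddExpandedGraph G f).Adj x2 x3)
    (hx0 : x0 = inl a) (hx3 : x3 = inl b)
    (hx1 : ∀ c, x1 ≠ inl c) (hx2 : ∀ c, x2 ≠ inl c) :
    ∃ e : G.edgeSet, (e : Sym2 V) = s(a, b) ∧
      (oddExpandedGraph G f).subgraphOfAdj h01 ⊔ (oddExpandedGraph G f).subgraphOfAdj h12 ⊔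
        (oddExpandedGraph G f).subgraphOfAdj h23 = gad3 f e := by
  subst hx0; subst hx3
  rcases x1 with c | p
  · exact absurd rfl (hx1 c)
  rcases x2 with c | q
  · exact absurd rfl (hx2 c)
  obtain ⟨e, he⟩ := seg2 hab h01 h12 h23
  refine ⟨e, ?_, ?_⟩
  · rcases he with ⟨-, -, ha, hb⟩ | ⟨-, -, ha, hb⟩
    · exact edge_of_or hf (Or.inl ⟨ha, hb⟩)
    · exact edge_of_or hf (Or.inr ⟨ha, hb⟩)
  · rcases he with ⟨rfl, rfl, rfl, rfl⟩ | ⟨rfl, rfl, rfl, rfl⟩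
    · rfl
    · rw [sgoa_eq h01 (gadj3 e) Sym2.eq_swap, sgoa_eq h12 (gadj2 e) Sym2.eq_swap,
        sgoa_eq h23 (gadj1 e) Sym2.eq_swap]
      show _ = (oddExpandedGraph G f).subgraphOfAdj (gadj1 e) ⊔ _ ⊔ _
      ac_rfl

lemma seg2_sup (hf : ∀ e : G.edgeSet, (e : Sym2 V) = s((f e).1, (f e).2))
    {x0 x1 x2 : V ⊕ (G.edgeSet × Fin 3)} {a b : V} (hab : a ≠ b)
    (h01 : (oddExpandedGraph G f).Adj x0 x1) (h12 : (oddExpandedGraph G f).Adj x1 x2)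
    (hx0 : x0 = inl a) (hx2 : x2 = inl b)
    (hx1 : ∀ c, x1 ≠ inl c) :
    ∃ e : G.edgeSet, (e : Sym2 V) = s(a, b) ∧ x1 = inr (e, 0) ∧
      (oddExpandedGraph G f).subgraphOfAdj h01 ⊔ (oddExpandedGraph G f).subgraphOfAdj h12
        = gad2 f e := by
  subst hx0; subst hx2
  rcases x1 with c | p
  · exact absurd rfl (hx1 c)
  obtain ⟨e, hp, he⟩ := seg1 hab h01 h12
  subst hp
  refine ⟨e, edge_of_or hf he, rfl, ?_⟩
  rcases he with ⟨rfl, rfl⟩ | ⟨rfl, rfl⟩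
  · rfl
  · rw [sgoa_eq h01 (gadj5 e) Sym2.eq_swap, sgoa_eq h12 (gadj4 e) Sym2.eq_swap]
    show _ = (oddExpandedGraph G f).subgraphOfAdj (gadj4 e) ⊔ _
    ac_rfl

end OE

open Function Sum SimpleGraph

namespace OE

variable {V : Type*} {G : SimpleGraph V} {f : G.edgeSet → V × V}

/-- triangle expansion -/
def exp3 (f : G.edgeSet → V × V) (K : G.Subgraph) : (oddExpandedGraph G f).Subgraph :=
  ⨆ d : {d : G.edgeSet // ↑d ∈ K.edgeSet}, gad3 f d.1

/-- 4-cycle-with-marked-edge expansion -/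
def exp4 (f : G.edgeSet → V × V) (K : G.Subgraph) (m : G.edgeSet) :
    (oddExpandedGraph G f).Subgraph :=
  gad3 f m ⊔ ⨆ d : {d : G.edgeSet // ↑d ∈ K.edgeSet ∧ d ≠ m}, gad2 f d.1

lemma gad3_verts (e : G.edgeSet) :
    (gad3 f e).verts = {inl (f e).1, inr (e,1), inr (e,2), inl (f e).2} := by
  show (_ ⊔ _ ⊔ _ : (oddExpandedGraph G f).Subgraph).verts = _
  rw [SimpleGraph.Subgraph.verts_sup, SimpleGraph.Subgraph.verts_sup,
    subgraphOfAdj_verts, subgraphOfAdj_verts, subgraphOfAdj_verts]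
  ext x; simp; tauto

lemma gad2_verts (e : G.edgeSet) :
    (gad2 f e).verts = {inl (f e).1, inr (e,0), inl (f e).2} := by
  show (_ ⊔ _ : (oddExpandedGraph G f).Subgraph).verts = _
  rw [SimpleGraph.Subgraph.verts_sup, subgraphOfAdj_verts, subgraphOfAdj_verts]
  ext x; simp; tauto

lemma exp3_verts (K : G.Subgraph) (x) :
    x ∈ (exp3 f K).verts ↔ ∃ e : G.edgeSet, ↑e ∈ K.edgeSet ∧
      (x = inl (f e).1 ∨ x = inr (e,1) ∨ x = inr (e,2) ∨ x = inl (f e).2) := by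
  rw [exp3, SimpleGraph.Subgraph.verts_iSup]
  constructor
  · intro hx
    obtain ⟨d, hd⟩ := Set.mem_iUnion.1 hx
    rw [gad3_verts] at hd
    exact ⟨d.1, d.2, by simpa using hd⟩
  · rintro ⟨e, he, hx⟩
    exact Set.mem_iUnion.2 ⟨⟨e, he⟩, by rw [gad3_verts]; simpa using hx⟩

lemma exp4_verts (K : G.Subgraph) (m : G.edgeSet) (x) :
    x ∈ (exp4 f K m).verts ↔
      (x = inl (f m).1 ∨ x = inr (m,1) ∨ x = inr (m,2) ∨ x = inl (f m).2) ∨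
      ∃ e : G.edgeSet, (↑e ∈ K.edgeSet ∧ e ≠ m) ∧
        (x = inl (f e).1 ∨ x = inr (e,0) ∨ x = inl (f e).2) := by
  rw [exp4, SimpleGraph.Subgraph.verts_sup, SimpleGraph.Subgraph.verts_iSup]
  constructor
  · rintro (hx | hx)
    · rw [gad3_verts] at hx; exact Or.inl (by simpa using hx)
    · obtain ⟨d, hd⟩ := Set.mem_iUnion.1 hx
      rw [gad2_verts] at hd
      exact Or.inr ⟨d.1, d.2, by simpa using hd⟩
  · rintro (hx | ⟨e, he, hx⟩)
    · exact Or.inl (by rw [gad3_verts]; simpa using hx)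
    · exact Or.inr (Set.mem_iUnion.2 ⟨⟨e, he⟩, by rw [gad2_verts]; simpa using hx⟩)

lemma mem3_inr1 (K : G.Subgraph) (e : G.edgeSet) :
    inr (e,1) ∈ (exp3 f K).verts ↔ ↑e ∈ K.edgeSet := by
  rw [exp3_verts]
  constructor
  · rintro ⟨d, hd, (h|h|h|h)⟩ <;> simp [Prod.ext_iff] at h
    · obtain ⟨rfl, -⟩ := h; exact hd
  · intro he; exact ⟨e, he, Or.inr (Or.inl rfl)⟩

lemma mem3_inr0 (K : G.Subgraph) (e : G.edgeSet) :
    inr (e,0) ∉ (exp3 f K).verts := by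
  rw [exp3_verts]
  rintro ⟨d, hd, (h|h|h|h)⟩ <;> simp [Prod.ext_iff] at h

lemma mem4_inr1 (K : G.Subgraph) (m : G.edgeSet) (e : G.edgeSet) :
    inr (e,1) ∈ (exp4 f K m).verts ↔ e = m := by
  rw [exp4_verts]
  constructor
  · rintro ((h|h|h|h) | ⟨d, hd, (h|h|h)⟩) <;> simp [Prod.ext_iff] at h
    · exact h
  · rintro rfl; exact Or.inl (Or.inr (Or.inl rfl))

lemma mem4_inr0 (K : G.Subgraph) (m : G.edgeSet) (e : G.edgeSet) :
    inr (e,0) ∈ (exp4 f K m).verts ↔ (↑e ∈ K.edgeSet ∧ e ≠ m) := by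
  rw [exp4_verts]
  constructor
  · rintro ((h|h|h|h) | ⟨d, hd, (h|h|h)⟩) <;> simp [Prod.ext_iff] at h
    · obtain ⟨rfl, -⟩ := h; exact hd
  · intro he; exact Or.inr ⟨e, he, Or.inr (Or.inl rfl)⟩

lemma mem3_inl (hf : ∀ e : G.edgeSet, (e : Sym2 V) = s((f e).1, (f e).2))
    (K : G.Subgraph)
    (hcov : ∀ a ∈ K.verts, ∃ e : G.edgeSet, ↑e ∈ K.edgeSet ∧ (a = (f e).1 ∨ a = (f e).2))
    (a : V) : inl a ∈ (exp3 f K).verts ↔ a ∈ K.verts := by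
  rw [exp3_verts]
  constructor
  · rintro ⟨d, hd, (h|h|h|h)⟩ <;> simp [Prod.ext_iff] at h <;> subst h
    · have : K.Adj (f d).1 (f d).2 := by
        rw [← SimpleGraph.Subgraph.mem_edgeSet, ← hf d]; exact hd
      exact this.fst_mem
    · have : K.Adj (f d).1 (f d).2 := by
        rw [← SimpleGraph.Subgraph.mem_edgeSet, ← hf d]; exact hd
      exact this.snd_mem
  · intro ha
    obtain ⟨e, he, h⟩ := hcov a ha
    rcases h with rfl | rfl
    · exact ⟨e, he, Or.inl rfl⟩
    · exact ⟨e, he, Or.inr (Or.inr (Or.inr rfl))⟩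

lemma mem4_inl (hf : ∀ e : G.edgeSet, (e : Sym2 V) = s((f e).1, (f e).2))
    (K : G.Subgraph) (m : G.edgeSet) (hm : ↑m ∈ K.edgeSet)
    (hcov : ∀ a ∈ K.verts, ∃ e : G.edgeSet, ↑e ∈ K.edgeSet ∧ (a = (f e).1 ∨ a = (f e).2))
    (a : V) : inl a ∈ (exp4 f K m).verts ↔ a ∈ K.verts := by
  have hKadj : ∀ d : G.edgeSet, ↑d ∈ K.edgeSet → K.Adj (f d).1 (f d).2 := by
    intro d hd
    rw [← SimpleGraph.Subgraph.mem_edgeSet, ← hf d]; exact hd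
  rw [exp4_verts]
  constructor
  · rintro ((h|h|h|h) | ⟨d, hd, (h|h|h)⟩) <;> simp [Prod.ext_iff] at h
    · subst h; exact (hKadj m hm).fst_mem
    · subst h; exact (hKadj m hm).snd_mem
    · subst h; exact (hKadj d hd.1).fst_mem
    · subst h; exact (hKadj d hd.1).snd_mem
  · intro ha
    obtain ⟨e, he, h⟩ := hcov a ha
    by_cases hem : e = m
    · subst hem
      rcases h with rfl | rfl
      · exact Or.inl (Or.inl rfl)
      · exact Or.inl (Or.inr (Or.inr (Or.inr rfl)))
    · rcases h with rfl | rfl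
      · exact Or.inr ⟨e, ⟨he, hem⟩, Or.inl rfl⟩
      · exact Or.inr ⟨e, ⟨he, hem⟩, Or.inr (Or.inr rfl)⟩

lemma subgraph_adj_iff (K : G.Subgraph) (a b : V) :
    K.Adj a b ↔ ∃ e : G.edgeSet, ↑e ∈ K.edgeSet ∧ (e : Sym2 V) = s(a,b) := by
  constructor
  · intro h
    exact ⟨⟨s(a,b), (SimpleGraph.mem_edgeSet G).2 (K.adj_sub h)⟩,
      SimpleGraph.Subgraph.mem_edgeSet.2 h, rfl⟩
  · rintro ⟨e, he, hs⟩
    rw [hs] at he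
    exact SimpleGraph.Subgraph.mem_edgeSet.1 he

end OE

open Function Sum SimpleGraph

namespace OE

variable {V : Type*} {G : SimpleGraph V} {f : G.edgeSet → V × V}

/-- the `k`-th edge of a cycle in `G` -/
def cycE {n : ℕ} (v : ZMod n → V) (hv : ∀ i, G.Adj (v i) (v (i+1))) (k : ZMod n) :
    G.edgeSet := ⟨s(v k, v (k+1)), hv k⟩

lemma cycE_mem {n : ℕ} (v : ZMod n → V) (hv) (k : ZMod n) :
    ↑(cycE v hv k) ∈ (cyc G n v hv).edgeSet := by
  rw [cyc_edgeSet]; exact ⟨k, rfl⟩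

lemma cycE_inj {n : ℕ} (h2 : (2 : ZMod n) ≠ 0) {v : ZMod n → V}
    (hvinj : Injective v) (hv : ∀ i, G.Adj (v i) (v (i+1))) :
    Injective (cycE v hv) := by
  intro i j h
  have h' : s(v i, v (i+1)) = s(v j, v (j+1)) := congrArg Subtype.val h
  rcases Sym2.eq_iff.1 h' with ⟨h1, -⟩ | ⟨h1, h2'⟩
  · exact hvinj h1
  · exfalso
    have hij : i = j + 1 := hvinj h1
    have hji : j = i + 1 := (hvinj h2').symm
    apply h2
    have : j + 1 + 1 = j := by rw [← hij, ← hji]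
    calc (2 : ZMod n) = (j + 1 + 1) - j := by ring
    _ = 0 := by rw [this]; ring

lemma cyc_edge_enum3 (v : ZMod 3 → V) (hv) (d : G.edgeSet) :
    ↑d ∈ (cyc G 3 v hv).edgeSet ↔
      d = cycE v hv 0 ∨ d = cycE v hv 1 ∨ d = cycE v hv 2 := by
  rw [cyc_edgeSet]
  constructor
  · rintro ⟨i, hi⟩
    rcases (by decide : ∀ i : ZMod 3, i = 0 ∨ i = 1 ∨ i = 2) i with rfl | rfl | rfl
    · exact Or.inl (Subtype.ext hi)
    · exact Or.inr (Or.inl (Subtype.ext hi))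
    · exact Or.inr (Or.inr (Subtype.ext hi))
  · rintro (rfl | rfl | rfl)
    exacts [⟨0, rfl⟩, ⟨1, rfl⟩, ⟨2, rfl⟩]

lemma cyc_edge_enum4 (v : ZMod 4 → V) (hv) (d : G.edgeSet) :
    ↑d ∈ (cyc G 4 v hv).edgeSet ↔
      d = cycE v hv 0 ∨ d = cycE v hv 1 ∨ d = cycE v hv 2 ∨ d = cycE v hv 3 := by
  rw [cyc_edgeSet]
  constructor
  · rintro ⟨i, hi⟩
    rcases (by decide : ∀ i : ZMod 4, i = 0 ∨ i = 1 ∨ i = 2 ∨ i = 3) i with rfl | rfl | rfl | rfl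
    · exact Or.inl (Subtype.ext hi)
    · exact Or.inr (Or.inl (Subtype.ext hi))
    · exact Or.inr (Or.inr (Or.inl (Subtype.ext hi)))
    · exact Or.inr (Or.inr (Or.inr (Subtype.ext hi)))
  · rintro (rfl | rfl | rfl | rfl)
    exacts [⟨0, rfl⟩, ⟨1, rfl⟩, ⟨2, rfl⟩, ⟨3, rfl⟩]

lemma cycE_or (hf : ∀ e : G.edgeSet, (e : Sym2 V) = s((f e).1, (f e).2))
    {n : ℕ} (v : ZMod n → V) (hv) (k : ZMod n) :
    (v k = (f (cycE v hv k)).1 ∧ v (k+1) = (f (cycE v hv k)).2) ∨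
    (v k = (f (cycE v hv k)).2 ∧ v (k+1) = (f (cycE v hv k)).1) := by
  have h : s(v k, v (k+1)) = s((f (cycE v hv k)).1, (f (cycE v hv k)).2) := hf (cycE v hv k)
  rcases Sym2.eq_iff.1 h with ⟨h1, h2⟩ | ⟨h1, h2⟩
  · exact Or.inl ⟨h1, h2⟩
  · exact Or.inr ⟨h1, h2⟩

lemma cyc_cov (hf : ∀ e : G.edgeSet, (e : Sym2 V) = s((f e).1, (f e).2))
    {n : ℕ} (v : ZMod n → V) (hv) :
    ∀ a ∈ (cyc G n v hv).verts, ∃ e : G.edgeSet,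
      ↑e ∈ (cyc G n v hv).edgeSet ∧ (a = (f e).1 ∨ a = (f e).2) := by
  rintro a ⟨i, rfl⟩
  refine ⟨cycE v hv i, cycE_mem v hv i, ?_⟩
  rcases cycE_or hf v hv i with ⟨h1, -⟩ | ⟨h1, -⟩
  · exact Or.inl h1
  · exact Or.inr h1

lemma exp3_cyc3 (v : ZMod 3 → V) (hv) :
    exp3 f (cyc G 3 v hv) =
      gad3 f (cycE v hv 0) ⊔ gad3 f (cycE v hv 1) ⊔ gad3 f (cycE v hv 2) :=
  iSup_subtype3 (cyc_edge_enum3 v hv) _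

lemma exp4_cyc4 {v : ZMod 4 → V} (hvinj : Injective v) (hv) :
    exp4 f (cyc G 4 v hv) (cycE v hv 0) =
      gad3 f (cycE v hv 0) ⊔
        (gad2 f (cycE v hv 1) ⊔ gad2 f (cycE v hv 2) ⊔ gad2 f (cycE v hv 3)) := by
  rw [exp4]
  congr 1
  apply iSup_subtype3
  intro d
  have hEinj := cycE_inj (by decide : (2 : ZMod 4) ≠ 0) hvinj hv
  constructor
  · rintro ⟨hd, hne⟩
    rcases (cyc_edge_enum4 v hv d).1 hd with rfl | rfl | rfl | rfl
    · exact absurd rfl hne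
    · exact Or.inl rfl
    · exact Or.inr (Or.inl rfl)
    · exact Or.inr (Or.inr rfl)
  · rintro (rfl | rfl | rfl)
    · exact ⟨(cyc_edge_enum4 v hv _).2 (Or.inr (Or.inl rfl)),
        fun h => absurd (hEinj h) (by decide : ¬(1 : ZMod 4) = 0)⟩
    · exact ⟨(cyc_edge_enum4 v hv _).2 (Or.inr (Or.inr (Or.inl rfl))),
        fun h => absurd (hEinj h) (by decide : ¬(2 : ZMod 4) = 0)⟩
    · exact ⟨(cyc_edge_enum4 v hv _).2 (Or.inr (Or.inr (Or.inr rfl))),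
        fun h => absurd (hEinj h) (by decide : ¬(3 : ZMod 4) = 0)⟩

lemma gad3_path (e : G.edgeSet) {a b : V}
    (hor : (a = (f e).1 ∧ b = (f e).2) ∨ (a = (f e).2 ∧ b = (f e).1)) :
    ∃ x y : G.edgeSet × Fin 3, x.1 = e ∧ y.1 = e ∧ x ≠ y ∧
      (oddExpandedGraph G f).Adj (inl a) (inr x) ∧
      (oddExpandedGraph G f).Adj (inr x) (inr y) ∧
      (oddExpandedGraph G f).Adj (inr y) (inl b) := by
  rcases hor with ⟨rfl, rfl⟩ | ⟨rfl, rfl⟩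
  · exact ⟨(e,1), (e,2), rfl, rfl, by simp, gadj1 e, gadj2 e, gadj3 e⟩
  · exact ⟨(e,2), (e,1), rfl, rfl, by simp, (gadj3 e).symm, (gadj2 e).symm, (gadj1 e).symm⟩

lemma gad2_adjl (e : G.edgeSet) {a : V} (ha : a = (f e).1 ∨ a = (f e).2) :
    (oddExpandedGraph G f).Adj (inl a) (inr (e, 0)) := by
  rcases ha with rfl | rfl
  · exact gadj4 e
  · exact (gadj5 e).symm

lemma build9 {α : Type*} (z0 z1 z2 z3 z4 z5 z6 z7 z8 : α) :
    ∃ w : ZMod 9 → α, w 0 = z0 ∧ w 1 = z1 ∧ w 2 = z2 ∧ w 3 = z3 ∧ w 4 = z4 ∧ w 5 = z5 ∧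
      w 6 = z6 ∧ w 7 = z7 ∧ w 8 = z8 :=
  ⟨fun k => ![z0,z1,z2,z3,z4,z5,z6,z7,z8] k, rfl, rfl, rfl, rfl, rfl, rfl, rfl, rfl, rfl⟩

lemma iSup_zmod9_3 {β : Type*} [CompleteLattice β] (g : ZMod 9 → β) :
    (⨆ i, g i) = (g 0 ⊔ g 1 ⊔ g 2) ⊔ (g 3 ⊔ g 4 ⊔ g 5) ⊔ (g 6 ⊔ g 7 ⊔ g 8) :=
  (iSup_zmod9 g).trans (by ac_rfl)

lemma iSup_zmod9_4 {β : Type*} [CompleteLattice β] (g : ZMod 9 → β) :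
    (⨆ i, g i) = (g 0 ⊔ g 1 ⊔ g 2) ⊔ ((g 3 ⊔ g 4) ⊔ (g 5 ⊔ g 6) ⊔ (g 7 ⊔ g 8)) :=
  (iSup_zmod9 g).trans (by ac_rfl)

end OE

open Function Sum SimpleGraph

namespace OE

variable {V : Type*} {G : SimpleGraph V} {f : G.edgeSet → V × V}

lemma exp3_iso (hf : ∀ e : G.edgeSet, (e : Sym2 V) = s((f e).1, (f e).2))
    {v : ZMod 3 → V} (hvinj : Injective v) (hv : ∀ i, G.Adj (v i) (v (i+1))) :
    Nonempty ((exp3 f (cyc G 3 v hv)).coe ≃g cycleGraphZMod 9) := by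
  classical
  obtain ⟨x0, y0, hx0e, hy0e, hxy0, a00, a01, a02⟩ :=
    gad3_path (cycE v hv 0) (cycE_or hf v hv 0)
  obtain ⟨x1, y1, hx1e, hy1e, hxy1, a10, a11, a12⟩ :=
    gad3_path (cycE v hv 1) (cycE_or hf v hv 1)
  obtain ⟨x2, y2, hx2e, hy2e, hxy2, a20, a21, a22⟩ :=
    gad3_path (cycE v hv 2) (cycE_or hf v hv 2)
  obtain ⟨w, W0, W1, W2, W3, W4, W5, W6, W7, W8⟩ :=
    build9 (inl (v 0)) (inr x0) (inr y0) (inl (v 1)) (inr x1) (inr y1)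
      (inl (v 2)) (inr x2) (inr y2)
  have A0 : (oddExpandedGraph G f).Adj (w 0) (w 1) := by rw [W0, W1]; exact a00
  have A1 : (oddExpandedGraph G f).Adj (w 1) (w 2) := by rw [W1, W2]; exact a01
  have A2 : (oddExpandedGraph G f).Adj (w 2) (w 3) := by rw [W2, W3]; exact a02
  have A3 : (oddExpandedGraph G f).Adj (w 3) (w 4) := by rw [W3, W4]; exact a10
  have A4 : (oddExpandedGraph G f).Adj (w 4) (w 5) := by rw [W4, W5]; exact a11
  have A5 : (oddExpandedGraph G f).Adj (w 5) (w 6) := by rw [W5, W6]; exact a12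
  have A6 : (oddExpandedGraph G f).Adj (w 6) (w 7) := by rw [W6, W7]; exact a20
  have A7 : (oddExpandedGraph G f).Adj (w 7) (w 8) := by rw [W7, W8]; exact a21
  have A8 : (oddExpandedGraph G f).Adj (w 8) (w 0) := by rw [W8, W0]; exact a22
  have hw : ∀ i : ZMod 9, (oddExpandedGraph G f).Adj (w i) (w (i+1)) := by
    intro i
    rcases (by decide :
        ∀ i : ZMod 9, i = 0 ∨ i = 1 ∨ i = 2 ∨ i = 3 ∨ i = 4 ∨ i = 5 ∨ i = 6 ∨ i = 7 ∨ i = 8) i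
      with rfl|rfl|rfl|rfl|rfl|rfl|rfl|rfl|rfl
    exacts [A0, A1, A2, A3, A4, A5, A6, A7, A8]
  have hv01 : v 0 ≠ v 1 := fun h => absurd (hvinj h) (by decide)
  have hv02 : v 0 ≠ v 2 := fun h => absurd (hvinj h) (by decide)
  have hv12 : v 1 ≠ v 2 := fun h => absurd (hvinj h) (by decide)
  have hE := cycE_inj (by decide : (2 : ZMod 3) ≠ 0) hvinj hv
  have hE10 : cycE v hv 1 ≠ cycE v hv 0 := fun h => absurd (hE h) (by decide)
  have hE20 : cycE v hv 2 ≠ cycE v hv 0 := fun h => absurd (hE h) (by decide)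
  have hE21 : cycE v hv 2 ≠ cycE v hv 1 := fun h => absurd (hE h) (by decide)
  have hρ : Function.LeftInverse (Sum.elim
      (fun c => if c = v 0 then (0 : ZMod 9) else if c = v 1 then 3 else 6)
      (fun z : G.edgeSet × Fin 3 =>
        if z.1 = cycE v hv 0 then (if z = x0 then 1 else 2)
        else if z.1 = cycE v hv 1 then (if z = x1 then 4 else 5)
        else (if z = x2 then 7 else 8))) w := by
    intro i
    rcases (by decide :
        ∀ i : ZMod 9, i = 0 ∨ i = 1 ∨ i = 2 ∨ i = 3 ∨ i = 4 ∨ i = 5 ∨ i = 6 ∨ i = 7 ∨ i = 8) i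
      with rfl|rfl|rfl|rfl|rfl|rfl|rfl|rfl|rfl
    · rw [W0]; simp
    · rw [W1]; simp [hx0e]
    · rw [W2]; simp [hy0e, Ne.symm hxy0]
    · rw [W3]; simp [Ne.symm hv01]
    · rw [W4]; simp [hx1e, hE10]
    · rw [W5]; simp [hy1e, hE10, Ne.symm hxy1]
    · rw [W6]; simp [Ne.symm hv02, Ne.symm hv12]
    · rw [W7]; simp [hx2e, hE20, hE21]
    · rw [W8]; simp [hy2e, hE20, hE21, Ne.symm hxy2]
  have hwinj : Injective w := Function.LeftInverse.injective hρ
  have hnl1 : ∀ c, w 1 ≠ inl c := fun c h => by rw [W1] at h; simp at h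
  have hnl2 : ∀ c, w 2 ≠ inl c := fun c h => by rw [W2] at h; simp at h
  have hnl4 : ∀ c, w 4 ≠ inl c := fun c h => by rw [W4] at h; simp at h
  have hnl5 : ∀ c, w 5 ≠ inl c := fun c h => by rw [W5] at h; simp at h
  have hnl7 : ∀ c, w 7 ≠ inl c := fun c h => by rw [W7] at h; simp at h
  have hnl8 : ∀ c, w 8 ≠ inl c := fun c h => by rw [W8] at h; simp at h
  obtain ⟨e0, hes0, heq0⟩ := seg3_sup hf hv01 A0 A1 A2 W0 W3 hnl1 hnl2
  obtain ⟨e1, hes1, heq1⟩ := seg3_sup hf hv12 A3 A4 A5 W3 W6 hnl4 hnl5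
  obtain ⟨e2, hes2, heq2⟩ := seg3_sup hf (Ne.symm hv02) A6 A7 A8 W6 W0 hnl7 hnl8
  have he0 : e0 = cycE v hv 0 := Subtype.ext hes0
  have he1 : e1 = cycE v hv 1 := Subtype.ext hes1
  have he2 : e2 = cycE v hv 2 := Subtype.ext hes2
  subst he0; subst he1; subst he2
  have key : exp3 f (cyc G 3 v hv) = cyc (oddExpandedGraph G f) 9 w hw := by
    rw [exp3_cyc3, cyc_eq_iSup, iSup_zmod9_3]
    refine congrArg₂ (· ⊔ ·) (congrArg₂ (· ⊔ ·) ?_ ?_) ?_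
    · exact heq0.symm
    · exact heq1.symm
    · exact heq2.symm
  rw [key]
  exact cyc_iso _ (by decide) w hwinj hw

lemma exp4_iso (hf : ∀ e : G.edgeSet, (e : Sym2 V) = s((f e).1, (f e).2))
    {v : ZMod 4 → V} (hvinj : Injective v) (hv : ∀ i, G.Adj (v i) (v (i+1))) :
    Nonempty ((exp4 f (cyc G 4 v hv) (cycE v hv 0)).coe ≃g cycleGraphZMod 9) := by
  classical
  obtain ⟨x0, y0, hx0e, hy0e, hxy0, a00, a01, a02⟩ :=
    gad3_path (cycE v hv 0) (cycE_or hf v hv 0)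
  have or1 := cycE_or hf v hv 1
  have or2 := cycE_or hf v hv 2
  have or3 := cycE_or hf v hv 3
  obtain ⟨w, W0, W1, W2, W3, W4, W5, W6, W7, W8⟩ :=
    build9 (inl (v 0)) (inr x0) (inr y0) (inl (v 1)) (inr (cycE v hv 1, 0)) (inl (v 2))
      (inr (cycE v hv 2, 0)) (inl (v 3)) (inr (cycE v hv 3, 0))
  have A0 : (oddExpandedGraph G f).Adj (w 0) (w 1) := by rw [W0, W1]; exact a00
  have A1 : (oddExpandedGraph G f).Adj (w 1) (w 2) := by rw [W1, W2]; exact a01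
  have A2 : (oddExpandedGraph G f).Adj (w 2) (w 3) := by rw [W2, W3]; exact a02
  have A3 : (oddExpandedGraph G f).Adj (w 3) (w 4) := by
    rw [W3, W4]
    exact gad2_adjl _ (or1.elim (fun h => Or.inl h.1) (fun h => Or.inr h.1))
  have A4 : (oddExpandedGraph G f).Adj (w 4) (w 5) := by
    rw [W4, W5]
    exact (gad2_adjl _ (or1.elim (fun h => Or.inr h.2) (fun h => Or.inl h.2))).symm
  have A5 : (oddExpandedGraph G f).Adj (w 5) (w 6) := by
    rw [W5, W6]
    exact gad2_adjl _ (or2.elim (fun h => Or.inl h.1) (fun h => Or.inr h.1))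
  have A6 : (oddExpandedGraph G f).Adj (w 6) (w 7) := by
    rw [W6, W7]
    exact (gad2_adjl _ (or2.elim (fun h => Or.inr h.2) (fun h => Or.inl h.2))).symm
  have A7 : (oddExpandedGraph G f).Adj (w 7) (w 8) := by
    rw [W7, W8]
    exact gad2_adjl _ (or3.elim (fun h => Or.inl h.1) (fun h => Or.inr h.1))
  have A8 : (oddExpandedGraph G f).Adj (w 8) (w 0) := by
    rw [W8, W0]
    exact (gad2_adjl _ (or3.elim (fun h => Or.inr h.2) (fun h => Or.inl h.2))).symm
  have hw : ∀ i : ZMod 9, (oddExpandedGraph G f).Adj (w i) (w (i+1)) := by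
    intro i
    rcases (by decide :
        ∀ i : ZMod 9, i = 0 ∨ i = 1 ∨ i = 2 ∨ i = 3 ∨ i = 4 ∨ i = 5 ∨ i = 6 ∨ i = 7 ∨ i = 8) i
      with rfl|rfl|rfl|rfl|rfl|rfl|rfl|rfl|rfl
    exacts [A0, A1, A2, A3, A4, A5, A6, A7, A8]
  have hv01 : v 0 ≠ v 1 := fun h => absurd (hvinj h) (by decide)
  have hv02 : v 0 ≠ v 2 := fun h => absurd (hvinj h) (by decide)
  have hv03 : v 0 ≠ v 3 := fun h => absurd (hvinj h) (by decide)
  have hv12 : v 1 ≠ v 2 := fun h => absurd (hvinj h) (by decide)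
  have hv13 : v 1 ≠ v 3 := fun h => absurd (hvinj h) (by decide)
  have hv23 : v 2 ≠ v 3 := fun h => absurd (hvinj h) (by decide)
  have hE := cycE_inj (by decide : (2 : ZMod 4) ≠ 0) hvinj hv
  have hE10 : cycE v hv 1 ≠ cycE v hv 0 := fun h => absurd (hE h) (by decide)
  have hE20 : cycE v hv 2 ≠ cycE v hv 0 := fun h => absurd (hE h) (by decide)
  have hE21 : cycE v hv 2 ≠ cycE v hv 1 := fun h => absurd (hE h) (by decide)
  have hE30 : cycE v hv 3 ≠ cycE v hv 0 := fun h => absurd (hE h) (by decide)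
  have hE31 : cycE v hv 3 ≠ cycE v hv 1 := fun h => absurd (hE h) (by decide)
  have hE32 : cycE v hv 3 ≠ cycE v hv 2 := fun h => absurd (hE h) (by decide)
  have hρ : Function.LeftInverse (Sum.elim
      (fun c => if c = v 0 then (0 : ZMod 9) else if c = v 1 then 3 else if c = v 2 then 5 else 7)
      (fun z : G.edgeSet × Fin 3 =>
        if z.1 = cycE v hv 0 then (if z = x0 then 1 else 2)
        else if z.1 = cycE v hv 1 then 4
        else if z.1 = cycE v hv 2 then 6
        else 8)) w := by
    intro i
    rcases (by decide :
        ∀ i : ZMod 9, i = 0 ∨ i = 1 ∨ i = 2 ∨ i = 3 ∨ i = 4 ∨ i = 5 ∨ i = 6 ∨ i = 7 ∨ i = 8) i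
      with rfl|rfl|rfl|rfl|rfl|rfl|rfl|rfl|rfl
    · rw [W0]; simp
    · rw [W1]; simp [hx0e]
    · rw [W2]; simp [hy0e, Ne.symm hxy0]
    · rw [W3]; simp [Ne.symm hv01]
    · rw [W4]; simp [hE10]
    · rw [W5]; simp [Ne.symm hv02, Ne.symm hv12]
    · rw [W6]; simp [hE20, hE21]
    · rw [W7]; simp [Ne.symm hv03, Ne.symm hv13, Ne.symm hv23]
    · rw [W8]; simp [hE30, hE31, hE32]
  have hwinj : Injective w := Function.LeftInverse.injective hρ
  have hnl1 : ∀ c, w 1 ≠ inl c := fun c h => by rw [W1] at h; simp at h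
  have hnl2 : ∀ c, w 2 ≠ inl c := fun c h => by rw [W2] at h; simp at h
  have hnl4 : ∀ c, w 4 ≠ inl c := fun c h => by rw [W4] at h; simp at h
  have hnl6 : ∀ c, w 6 ≠ inl c := fun c h => by rw [W6] at h; simp at h
  have hnl8 : ∀ c, w 8 ≠ inl c := fun c h => by rw [W8] at h; simp at h
  obtain ⟨e0, hes0, heq0⟩ := seg3_sup hf hv01 A0 A1 A2 W0 W3 hnl1 hnl2
  obtain ⟨e1, hes1, -, heq1⟩ := seg2_sup hf hv12 A3 A4 W3 W5 hnl4
  obtain ⟨e2, hes2, -, heq2⟩ := seg2_sup hf hv23 A5 A6 W5 W7 hnl6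
  obtain ⟨e3, hes3, -, heq3⟩ := seg2_sup hf (Ne.symm hv03) A7 A8 W7 W0 hnl8
  have he0 : e0 = cycE v hv 0 := Subtype.ext hes0
  have he1 : e1 = cycE v hv 1 := Subtype.ext hes1
  have he2 : e2 = cycE v hv 2 := Subtype.ext hes2
  have he3 : e3 = cycE v hv 3 := Subtype.ext hes3
  subst he0; subst he1; subst he2; subst he3
  have key : exp4 f (cyc G 4 v hv) (cycE v hv 0) = cyc (oddExpandedGraph G f) 9 w hw := by
    rw [exp4_cyc4 hvinj, cyc_eq_iSup, iSup_zmod9_4]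
    refine congrArg₂ (· ⊔ ·) ?_ (congrArg₂ (· ⊔ ·) (congrArg₂ (· ⊔ ·) ?_ ?_) ?_)
    · exact heq0.symm
    · exact heq1.symm
    · exact heq2.symm
    · exact heq3.symm
  rw [key]
  exact cyc_iso _ (by decide) w hwinj hw

end OE

open Function Sum SimpleGraph

namespace OE

variable {V : Type*} {G : SimpleGraph V} {f : G.edgeSet → V × V}

set_option maxHeartbeats 1000000 in
lemma classify (hf : ∀ e : G.edgeSet, (e : Sym2 V) = s((f e).1, (f e).2))
    (H : (oddExpandedGraph G f).Subgraph)
    (hH : Nonempty (H.coe ≃g cycleGraphZMod 9)) :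
    (∃ (v : ZMod 3 → V) (hvinj : Injective v) (hv : ∀ i, G.Adj (v i) (v (i+1))),
        H = exp3 f (cyc G 3 v hv)) ∨
    (∃ (v : ZMod 4 → V) (hvinj : Injective v) (hv : ∀ i, G.Adj (v i) (v (i+1))),
        H = exp4 f (cyc G 4 v hv) (cycE v hv 0)) := by
  obtain ⟨w0, hw0inj, hw0, rfl⟩ := exists_cyc _ (by decide) H hH
  have hS1 : ∀ i, ¬((w0 i).isLeft = true ∧ (w0 (i+1)).isLeft = true) := by
    rintro i ⟨h1, h2⟩
    obtain ⟨a, ha⟩ := Sum.isLeft_iff.1 h1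
    obtain ⟨b, hb⟩ := Sum.isLeft_iff.1 h2
    have h := hw0 i
    rw [ha, hb] at h
    exact adj_inl_inl a b h
  have hS2 : ∀ i, ¬((w0 i).isLeft = false ∧ (w0 (i+1)).isLeft = false ∧
      (w0 (i+2)).isLeft = false) := by
    rintro i ⟨h1, h2, h3⟩
    rcases hx1 : w0 i with a | x
    · rw [hx1] at h1; simp at h1
    rcases hx2 : w0 (i+1) with a | y
    · rw [hx2] at h2; simp at h2
    rcases hx3 : w0 (i+2) with a | z
    · rw [hx3] at h3; simp at h3
    have h12 := hw0 i
    have h23 := hw0 (i+1)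
    rw [hx1, hx2] at h12
    rw [show i+1+1 = i+2 from by ring, hx2, hx3] at h23
    have hxz : x = z := no_three_inr h12 h23
    have : w0 i = w0 (i+2) := by rw [hx1, hx3, hxz]
    exact (by decide : ∀ i : ZMod 9, ¬ i = i + 2) i (hw0inj this)
  have hS3 : ∃ i, (w0 i).isLeft = true := by
    by_contra hc
    push_neg at hc
    exact hS2 0 ⟨by simpa using hc 0, by simpa using hc (0+1), by simpa using hc (0+2)⟩
  obtain ⟨j, hpat⟩ := patternClassify (fun i => (w0 i).isLeft) hS3 hS1 hS2
  rcases hpat with hA | hB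
  · -- triangle case
    have hA' : ∀ t : ZMod 9, (w0 (j + t)).isLeft = true ↔ (t = 0 ∨ t = 3 ∨ t = 6) := by
      intro t
      rw [hA (j + t)]
      constructor
      · rintro (h | h | h)
        · exact Or.inl (add_left_cancel (a := j) (by rwa [add_zero]))
        · exact Or.inr (Or.inl (add_left_cancel h))
        · exact Or.inr (Or.inr (add_left_cancel h))
      · rintro (rfl | rfl | rfl)
        · exact Or.inl (add_zero j)
        · exact Or.inr (Or.inl rfl)
        · exact Or.inr (Or.inr rfl)
    obtain ⟨a, V0⟩ := Sum.isLeft_iff.1 ((hA' 0).2 (Or.inl rfl))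
    obtain ⟨b, V3⟩ := Sum.isLeft_iff.1 ((hA' 3).2 (Or.inr (Or.inl rfl)))
    obtain ⟨c, V6⟩ := Sum.isLeft_iff.1 ((hA' 6).2 (Or.inr (Or.inr rfl)))
    have N : ∀ t : ZMod 9, ¬(t = 0 ∨ t = 3 ∨ t = 6) → ∀ cc, w0 (j + t) ≠ inl cc := by
      intro t ht cc h
      exact ht ((hA' t).1 (by rw [h]; rfl))
    have hab : a ≠ b := fun h => (by decide : ¬(0 : ZMod 9) = 3)
      (add_left_cancel (hw0inj (by rw [V0, V3, h])))
    have hbc : b ≠ c := fun h => (by decide : ¬(3 : ZMod 9) = 6)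
      (add_left_cancel (hw0inj (by rw [V3, V6, h])))
    have hca : c ≠ a := fun h => (by decide : ¬(6 : ZMod 9) = 0)
      (add_left_cancel (hw0inj (by rw [V6, V0, h])))
    have rot := rot_adj hw0 j
    obtain ⟨e0, hes0, heq0⟩ := seg3_sup hf hab (rot 0) (rot 1) (rot 2) V0 V3
      (N 1 (by decide)) (N 2 (by decide))
    obtain ⟨e1, hes1, heq1⟩ := seg3_sup hf hbc (rot 3) (rot 4) (rot 5) V3 V6
      (N 4 (by decide)) (N 5 (by decide))
    obtain ⟨e2, hes2, heq2⟩ := seg3_sup hf hca (rot 6) (rot 7) (rot 8) V6 V0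
      (N 7 (by decide)) (N 8 (by decide))
    have hv : ∀ i : ZMod 3, G.Adj ((fun k : ZMod 3 => ![a,b,c] k) i) ((fun k : ZMod 3 => ![a,b,c] k) (i+1)) := by
      intro i
      rcases (by decide : ∀ i : ZMod 3, i = 0 ∨ i = 1 ∨ i = 2) i with rfl|rfl|rfl
      · exact adj_of_edge hes0
      · exact adj_of_edge hes1
      · exact adj_of_edge hes2
    have hvinj : Injective (fun k : ZMod 3 => ![a,b,c] k) := by
      intro s t h
      rcases (by decide : ∀ i : ZMod 3, i = 0 ∨ i = 1 ∨ i = 2) s with rfl|rfl|rfl <;>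
        rcases (by decide : ∀ i : ZMod 3, i = 0 ∨ i = 1 ∨ i = 2) t with rfl|rfl|rfl <;>
        first
        | rfl
        | exact absurd (show a = b from h) hab
        | exact absurd (show b = c from h) hbc
        | exact absurd (show c = a from h) hca
        | exact absurd (show b = a from h) (Ne.symm hab)
        | exact absurd (show c = b from h) (Ne.symm hbc)
        | exact absurd (show a = c from h) (Ne.symm hca)
    refine Or.inl ⟨_, hvinj, hv, ?_⟩
    have hE0 : e0 = cycE (fun k : ZMod 3 => ![a,b,c] k) hv 0 := Subtype.ext hes0
    have hE1 : e1 = cycE (fun k : ZMod 3 => ![a,b,c] k) hv 1 := Subtype.ext hes1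
    have hE2 : e2 = cycE (fun k : ZMod 3 => ![a,b,c] k) hv 2 := Subtype.ext hes2
    rw [← cyc_rot w0 hw0 j, cyc_eq_iSup, iSup_zmod9_3, exp3_cyc3, ← hE0, ← hE1, ← hE2]
    refine congrArg₂ (· ⊔ ·) (congrArg₂ (· ⊔ ·) ?_ ?_) ?_
    exacts [heq0, heq1, heq2]
  · -- square case
    have hB' : ∀ t : ZMod 9, (w0 (j + t)).isLeft = true ↔
        (t = 0 ∨ t = 3 ∨ t = 5 ∨ t = 7) := by
      intro t
      rw [hB (j + t)]
      constructor
      · rintro (h | h | h | h)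
        · exact Or.inl (add_left_cancel (a := j) (by rwa [add_zero]))
        · exact Or.inr (Or.inl (add_left_cancel h))
        · exact Or.inr (Or.inr (Or.inl (add_left_cancel h)))
        · exact Or.inr (Or.inr (Or.inr (add_left_cancel h)))
      · rintro (rfl | rfl | rfl | rfl)
        · exact Or.inl (add_zero j)
        · exact Or.inr (Or.inl rfl)
        · exact Or.inr (Or.inr (Or.inl rfl))
        · exact Or.inr (Or.inr (Or.inr rfl))
    obtain ⟨a, V0⟩ := Sum.isLeft_iff.1 ((hB' 0).2 (Or.inl rfl))
    obtain ⟨b, V3⟩ := Sum.isLeft_iff.1 ((hB' 3).2 (Or.inr (Or.inl rfl)))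
    obtain ⟨c, V5⟩ := Sum.isLeft_iff.1 ((hB' 5).2 (Or.inr (Or.inr (Or.inl rfl))))
    obtain ⟨d, V7⟩ := Sum.isLeft_iff.1 ((hB' 7).2 (Or.inr (Or.inr (Or.inr rfl))))
    have N : ∀ t : ZMod 9, ¬(t = 0 ∨ t = 3 ∨ t = 5 ∨ t = 7) → ∀ cc, w0 (j + t) ≠ inl cc := by
      intro t ht cc h
      exact ht ((hB' t).1 (by rw [h]; rfl))
    have hab : a ≠ b := fun h => (by decide : ¬(0 : ZMod 9) = 3)
      (add_left_cancel (hw0inj (by rw [V0, V3, h])))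
    have hac : a ≠ c := fun h => (by decide : ¬(0 : ZMod 9) = 5)
      (add_left_cancel (hw0inj (by rw [V0, V5, h])))
    have had : a ≠ d := fun h => (by decide : ¬(0 : ZMod 9) = 7)
      (add_left_cancel (hw0inj (by rw [V0, V7, h])))
    have hbc : b ≠ c := fun h => (by decide : ¬(3 : ZMod 9) = 5)
      (add_left_cancel (hw0inj (by rw [V3, V5, h])))
    have hbd : b ≠ d := fun h => (by decide : ¬(3 : ZMod 9) = 7)
      (add_left_cancel (hw0inj (by rw [V3, V7, h])))
    have hcd : c ≠ d := fun h => (by decide : ¬(5 : ZMod 9) = 7)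
      (add_left_cancel (hw0inj (by rw [V5, V7, h])))
    have rot := rot_adj hw0 j
    obtain ⟨e0, hes0, heq0⟩ := seg3_sup hf hab (rot 0) (rot 1) (rot 2) V0 V3
      (N 1 (by decide)) (N 2 (by decide))
    obtain ⟨e1, hes1, -, heq1⟩ := seg2_sup hf hbc (rot 3) (rot 4) V3 V5 (N 4 (by decide))
    obtain ⟨e2, hes2, -, heq2⟩ := seg2_sup hf hcd (rot 5) (rot 6) V5 V7 (N 6 (by decide))
    obtain ⟨e3, hes3, -, heq3⟩ := seg2_sup hf (Ne.symm had) (rot 7) (rot 8) V7 V0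
      (N 8 (by decide))
    have hv : ∀ i : ZMod 4, G.Adj ((fun k : ZMod 4 => ![a,b,c,d] k) i) ((fun k : ZMod 4 => ![a,b,c,d] k) (i+1)) := by
      intro i
      rcases (by decide : ∀ i : ZMod 4, i = 0 ∨ i = 1 ∨ i = 2 ∨ i = 3) i with rfl|rfl|rfl|rfl
      · exact adj_of_edge hes0
      · exact adj_of_edge hes1
      · exact adj_of_edge hes2
      · exact adj_of_edge hes3
    have hvinj : Injective (fun k : ZMod 4 => ![a,b,c,d] k) := by
      intro s t h
      rcases (by decide : ∀ i : ZMod 4, i = 0 ∨ i = 1 ∨ i = 2 ∨ i = 3) s with rfl|rfl|rfl|rfl <;>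
        rcases (by decide : ∀ i : ZMod 4, i = 0 ∨ i = 1 ∨ i = 2 ∨ i = 3) t with rfl|rfl|rfl|rfl <;>
        first
        | rfl
        | exact absurd (show a = b from h) hab
        | exact absurd (show a = c from h) hac
        | exact absurd (show a = d from h) had
        | exact absurd (show b = c from h) hbc
        | exact absurd (show b = d from h) hbd
        | exact absurd (show c = d from h) hcd
        | exact absurd (show b = a from h) (Ne.symm hab)
        | exact absurd (show c = a from h) (Ne.symm hac)
        | exact absurd (show d = a from h) (Ne.symm had)
        | exact absurd (show c = b from h) (Ne.symm hbc)
        | exact absurd (show d = b from h) (Ne.symm hbd)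
        | exact absurd (show d = c from h) (Ne.symm hcd)
    refine Or.inr ⟨_, hvinj, hv, ?_⟩
    have hE0 : e0 = cycE (fun k : ZMod 4 => ![a,b,c,d] k) hv 0 := Subtype.ext hes0
    have hE1 : e1 = cycE (fun k : ZMod 4 => ![a,b,c,d] k) hv 1 := Subtype.ext hes1
    have hE2 : e2 = cycE (fun k : ZMod 4 => ![a,b,c,d] k) hv 2 := Subtype.ext hes2
    have hE3 : e3 = cycE (fun k : ZMod 4 => ![a,b,c,d] k) hv 3 := Subtype.ext hes3
    rw [← cyc_rot w0 hw0 j, cyc_eq_iSup, iSup_zmod9_4, exp4_cyc4 hvinj]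
    rw [← hE0, ← hE1, ← hE2, ← hE3]
    refine congrArg₂ (· ⊔ ·) ?_ (congrArg₂ (· ⊔ ·) (congrArg₂ (· ⊔ ·) ?_ ?_) ?_)
    exacts [heq0, heq1, heq2, heq3]

end OE

open Function Sum SimpleGraph

namespace OE

variable {V : Type*} {G : SimpleGraph V} {f : G.edgeSet → V × V}

lemma exp3_mem (hf : ∀ e : G.edgeSet, (e : Sym2 V) = s((f e).1, (f e).2))
    (K : G.Subgraph) (hK : Nonempty (K.coe ≃g cycleGraphZMod 3)) :
    Nonempty ((exp3 f K).coe ≃g cycleGraphZMod 9) := by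
  obtain ⟨v, hvinj, hv, rfl⟩ := exists_cyc _ (by decide) K hK
  exact exp3_iso hf hvinj hv

lemma exp4_mem (hf : ∀ e : G.edgeSet, (e : Sym2 V) = s((f e).1, (f e).2))
    (K : G.Subgraph) (hK : Nonempty (K.coe ≃g cycleGraphZMod 4))
    (m : G.edgeSet) (hm : ↑m ∈ K.edgeSet) :
    Nonempty ((exp4 f K m).coe ≃g cycleGraphZMod 9) := by
  obtain ⟨v, hvinj, hv, rfl⟩ := exists_cyc _ (by decide) K hK
  rw [cyc_edgeSet] at hm
  obtain ⟨k, hk⟩ := hm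
  have hvinj' : Injective (fun i => v (k+i)) := fun s t h => add_left_cancel (hvinj h)
  have hm' : m = cycE (fun i => v (k+i)) (rot_adj hv k) 0 := by
    apply Subtype.ext
    show (m : Sym2 V) = s(v (k+0), v (k+(0+1)))
    rw [hk, add_zero, show k + (0+1 : ZMod 4) = k + 1 from by norm_num]
  rw [← cyc_rot v hv k, hm']
  exact exp4_iso hf hvinj' (rot_adj hv k)

lemma exp3_inj (hf : ∀ e : G.edgeSet, (e : Sym2 V) = s((f e).1, (f e).2))
    {K K' : G.Subgraph}
    (hK : Nonempty (K.coe ≃g cycleGraphZMod 3)) (hK' : Nonempty (K'.coe ≃g cycleGraphZMod 3))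
    (h : exp3 f K = exp3 f K') : K = K' := by
  obtain ⟨v, hvinj, hv, rfl⟩ := exists_cyc _ (by decide) K hK
  obtain ⟨v', hvinj', hv', rfl⟩ := exists_cyc _ (by decide) K' hK'
  apply SimpleGraph.Subgraph.ext
  · ext a
    rw [← mem3_inl hf _ (cyc_cov hf v hv) a, ← mem3_inl hf _ (cyc_cov hf v' hv') a, h]
  · funext a b
    apply propext
    rw [subgraph_adj_iff, subgraph_adj_iff]
    constructor
    · rintro ⟨e, he, hs⟩
      exact ⟨e, (mem3_inr1 _ e).1 (by rw [← h]; exact (mem3_inr1 _ e).2 he), hs⟩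
    · rintro ⟨e, he, hs⟩
      exact ⟨e, (mem3_inr1 _ e).1 (by rw [h]; exact (mem3_inr1 _ e).2 he), hs⟩

lemma exp34_ne (hf : ∀ e : G.edgeSet, (e : Sym2 V) = s((f e).1, (f e).2))
    {K K' : G.Subgraph} (hK' : Nonempty (K'.coe ≃g cycleGraphZMod 4))
    (m : G.edgeSet) (hm : ↑m ∈ K'.edgeSet) :
    exp3 f K ≠ exp4 f K' m := by
  intro h
  obtain ⟨v', hvinj', hv', rfl⟩ := exists_cyc _ (by decide) K' hK'
  have hE := cycE_inj (by decide : (2 : ZMod 4) ≠ 0) hvinj' hv'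
  have h01 : cycE v' hv' 0 ≠ cycE v' hv' 1 := fun hh => absurd (hE hh) (by decide)
  have hex : ∃ e : G.edgeSet, ↑e ∈ (cyc G 4 v' hv').edgeSet ∧ e ≠ m := by
    by_cases h0 : cycE v' hv' 0 = m
    · exact ⟨cycE v' hv' 1, cycE_mem _ _ _, fun hh => h01 (by rw [h0, ← hh])⟩
    · exact ⟨cycE v' hv' 0, cycE_mem _ _ _, h0⟩
  obtain ⟨e, he, hem⟩ := hex
  have h4 : inr (e,0) ∈ (exp4 f (cyc G 4 v' hv') m).verts := (mem4_inr0 _ m e).2 ⟨he, hem⟩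
  rw [← h] at h4
  exact mem3_inr0 K e h4

lemma exp4_inj (hf : ∀ e : G.edgeSet, (e : Sym2 V) = s((f e).1, (f e).2))
    {K K' : G.Subgraph}
    (hK : Nonempty (K.coe ≃g cycleGraphZMod 4)) (hK' : Nonempty (K'.coe ≃g cycleGraphZMod 4))
    {m m' : G.edgeSet} (hm : ↑m ∈ K.edgeSet) (hm' : ↑m' ∈ K'.edgeSet)
    (h : exp4 f K m = exp4 f K' m') : K = K' ∧ m = m' := by
  have hmm : m = m' := by
    have h1 : inr (m,1) ∈ (exp4 f K m).verts := (mem4_inr1 _ _ m).2 rfl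
    rw [h] at h1
    exact (mem4_inr1 _ _ m).1 h1
  subst hmm
  refine ⟨?_, rfl⟩
  obtain ⟨v, hvinj, hv, rfl⟩ := exists_cyc _ (by decide) K hK
  obtain ⟨v', hvinj', hv', rfl⟩ := exists_cyc _ (by decide) K' hK'
  apply SimpleGraph.Subgraph.ext
  · ext a
    rw [← mem4_inl hf _ m hm (cyc_cov hf v hv) a, ← mem4_inl hf _ m hm' (cyc_cov hf v' hv') a, h]
  · funext a b
    apply propext
    rw [subgraph_adj_iff, subgraph_adj_iff]
    constructor
    · rintro ⟨e, he, hs⟩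
      refine ⟨e, ?_, hs⟩
      by_cases hem : e = m
      · rw [hem]; exact hm'
      · have := (mem4_inr0 (f := f) _ m e).2 ⟨he, hem⟩
        rw [h] at this
        exact ((mem4_inr0 _ m e).1 this).1
    · rintro ⟨e, he, hs⟩
      refine ⟨e, ?_, hs⟩
      by_cases hem : e = m
      · rw [hem]; exact hm
      · have := (mem4_inr0 (f := f) _ m e).2 ⟨he, hem⟩
        rw [← h] at this
        exact ((mem4_inr0 _ m e).1 this).1

lemma subgraph_finite {W : Type*} [Finite W] (G : SimpleGraph W) : Finite G.Subgraph :=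
  Finite.of_injective (fun H => (H.verts, H.Adj))
    (fun _ _ h => SimpleGraph.Subgraph.ext (congrArg Prod.fst h) (congrArg Prod.snd h))

end OE

open Function Sum SimpleGraph

namespace OE

variable {V : Type*} {G : SimpleGraph V} {f : G.edgeSet → V × V}

lemma card_eq [Fintype V] (hf : ∀ e : G.edgeSet, (e : Sym2 V) = s((f e).1, (f e).2)) :
    Nat.card {H : (oddExpandedGraph G f).Subgraph // Nonempty (H.coe ≃g cycleGraphZMod 9)} =
    Nat.card {K : G.Subgraph // Nonempty (K.coe ≃g cycleGraphZMod 3)} +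
    4 * Nat.card {K : G.Subgraph // Nonempty (K.coe ≃g cycleGraphZMod 4)} := by
  classical
  haveI : Finite (Sym2 V) := Quot.finite _
  haveI : Finite G.Subgraph := subgraph_finite G
  haveI : Finite (oddExpandedGraph G f).Subgraph := subgraph_finite _
  set A := {H : (oddExpandedGraph G f).Subgraph // Nonempty (H.coe ≃g cycleGraphZMod 9)}
    with hA
  set B3 := {K : G.Subgraph // Nonempty (K.coe ≃g cycleGraphZMod 3)} with hB3
  set B4 := {K : G.Subgraph // Nonempty (K.coe ≃g cycleGraphZMod 4)} with hB4
  set D := (K : B4) × {m : G.edgeSet // ↑m ∈ K.1.edgeSet} with hD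
  let Phi : B3 ⊕ D → A := fun x =>
    match x with
    | Sum.inl ⟨K, hK⟩ => ⟨exp3 f K, exp3_mem hf K hK⟩
    | Sum.inr ⟨⟨K, hK⟩, m, hm⟩ => ⟨exp4 f K m, exp4_mem hf K hK m hm⟩
  have hinj : Injective Phi := by
    rintro (⟨K, hK⟩ | ⟨⟨K, hK⟩, m, hm⟩) (⟨K', hK'⟩ | ⟨⟨K', hK'⟩, m', hm'⟩) h <;>
      have hval := congrArg Subtype.val h
    · obtain rfl := exp3_inj hf hK hK' hval
      rfl
    · exact absurd hval (exp34_ne hf hK' m' hm')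
    · exact absurd hval.symm (exp34_ne hf hK m hm)
    · obtain ⟨rfl, rfl⟩ := exp4_inj hf hK hK' hm hm' hval
      rfl
  have hsurj : Surjective Phi := by
    rintro ⟨H, hH⟩
    rcases classify hf H hH with ⟨v, hvinj, hv, rfl⟩ | ⟨v, hvinj, hv, rfl⟩
    · exact ⟨Sum.inl ⟨cyc G 3 v hv, cyc_iso G (by decide) v hvinj hv⟩, rfl⟩
    · exact ⟨Sum.inr ⟨⟨cyc G 4 v hv, cyc_iso G (by decide) v hvinj hv⟩,
        cycE v hv 0, cycE_mem v hv 0⟩, rfl⟩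
  have hDcard : Nat.card D = 4 * Nat.card B4 := by
    have hfib : ∀ K : B4, Nonempty ({m : G.edgeSet // ↑m ∈ K.1.edgeSet} ≃ ZMod 4) := by
      rintro ⟨K, hK⟩
      obtain ⟨v, hvinj, hv, rfl⟩ := exists_cyc _ (by decide) K hK
      refine ⟨(Equiv.ofBijective (fun k => ⟨cycE v hv k, cycE_mem v hv k⟩) ⟨?_, ?_⟩).symm⟩
      · intro s t h
        exact cycE_inj (by decide) hvinj hv (congrArg Subtype.val h)
      · rintro ⟨m, hm⟩
        rcases (cyc_edge_enum4 v hv m).1 hm with rfl | rfl | rfl | rfl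
        · exact ⟨0, rfl⟩
        · exact ⟨1, rfl⟩
        · exact ⟨2, rfl⟩
        · exact ⟨3, rfl⟩
    have hDe : D ≃ B4 × ZMod 4 :=
      (Equiv.sigmaCongrRight fun K => (hfib K).some).trans (Equiv.sigmaEquivProd _ _)
    rw [Nat.card_congr hDe, Nat.card_prod]
    have : Nat.card (ZMod 4) = 4 := by
      rw [Nat.card_eq_fintype_card, ZMod.card]
    rw [this, Nat.mul_comm]
  calc Nat.card A = Nat.card (B3 ⊕ D) := (Nat.card_congr (Equiv.ofBijective Phi ⟨hinj, hsurj⟩)).symm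
  _ = Nat.card B3 + Nat.card D := Nat.card_sum
  _ = Nat.card B3 + 4 * Nat.card B4 := by rw [hDcard]

end OE

/-- The number of `9`-cycle subgraphs of the odd expanded graph `G''` equals
the number of `3`-cycle subgraphs of `G` plus `4` times the number of
`4`-cycle subgraphs of `G`. -/
theorem oddExpanded_nineCycles {V : Type*} [Fintype V] (G : SimpleGraph V)
    (f : G.edgeSet → V × V)
    (hf : ∀ e : G.edgeSet, (e : Sym2 V) = s((f e).1, (f e).2)) :
    cycleCount (oddExpandedGraph G f) 9 = cycleCount G 3 + 4 * cycleCount G 4 := by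
  exact OE.card_eq hf
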